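/- The function u(x₁, x₂, x₃) = (x₁² + x₂²)e^{x₃} + ¼e^{−x₃} − e^{x₃} satisfies σ₂(λ(D²u)) = 1 in ℝ³₊ = {x₃ > 0}, where σ₂ of a symmetric 3×3 matrix is the sum of its three 2×2 principal minors (the second elementary symmetric polynomial of the eigenvalues). Moreover, on the boundary {x₃ = 0}, u(x₁, x₂, 0) = x₁² + x₂² − 3/4 is a quadratic polynomial, while u is not a polynomial in ℝ³₊. -/

import Mathlib

open Finset

/-- Second partial derivative `∂_j ∂_i f` at `x`. -/
noncomputable def pd2 {m : ℕ} (f : (Fin m → ℝ) → ℝ) (x : Fin m → ℝ) (i j : Fin m) : ℝ :=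
  fderiv ℝ (fun y => fderiv ℝ f y (Pi.single i 1)) x (Pi.single j 1)

section aux
open ContinuousLinearMap

noncomputable def L3 (a b c : ℝ) : (Fin 3 → ℝ) →L[ℝ] ℝ :=
  a • proj 0 + b • proj 1 + c • proj 2

@[simp] lemma L3_apply (a b c : ℝ) (v : Fin 3 → ℝ) :
    L3 a b c v = a * v 0 + b * v 1 + c * v 2 := by
  simp [L3, smul_eq_mul]

lemma hsq0 (y : Fin 3 → ℝ) : HasFDerivAt (fun x : Fin 3 → ℝ => x 0 ^ 2)
    ((y 0 • proj 0 + y 0 • proj 0 : (Fin 3 → ℝ) →L[ℝ] ℝ)) y := by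
  simpa [sq, Pi.mul_def] using (hasFDerivAt_apply (𝕜 := ℝ) (0 : Fin 3) y).mul
    (hasFDerivAt_apply (𝕜 := ℝ) (0 : Fin 3) y)

lemma hsq1 (y : Fin 3 → ℝ) : HasFDerivAt (fun x : Fin 3 → ℝ => x 1 ^ 2)
    ((y 1 • proj 1 + y 1 • proj 1 : (Fin 3 → ℝ) →L[ℝ] ℝ)) y := by
  simpa [sq, Pi.mul_def] using (hasFDerivAt_apply (𝕜 := ℝ) (1 : Fin 3) y).mul
    (hasFDerivAt_apply (𝕜 := ℝ) (1 : Fin 3) y)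

lemma hU (y : Fin 3 → ℝ) :
    HasFDerivAt (fun x : Fin 3 → ℝ =>
        ((x 0)^2 + (x 1)^2)*Real.exp (x 2) + 1/4*Real.exp (-(x 2)) - Real.exp (x 2))
      (L3 (2*y 0*Real.exp (y 2)) (2*y 1*Real.exp (y 2))
        ((y 0^2+y 1^2)*Real.exp (y 2) - 1/4*Real.exp (-(y 2)) - Real.exp (y 2))) y := by
  have h2 := hasFDerivAt_apply (𝕜 := ℝ) (2 : Fin 3) y
  have H := ((((hsq0 y).add (hsq1 y)).mul h2.exp).add
      ((h2.neg.exp).const_mul (1/4:ℝ))).sub h2.exp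
  refine H.congr_fderiv ?_
  ext v
  simp [L3, smul_eq_mul]
  ring

lemma hG0 (y : Fin 3 → ℝ) :
    HasFDerivAt (fun x : Fin 3 → ℝ => 2*x 0*Real.exp (x 2))
      (L3 (2*Real.exp (y 2)) 0 (2*y 0*Real.exp (y 2))) y := by
  have h0 := hasFDerivAt_apply (𝕜 := ℝ) (0 : Fin 3) y
  have h2 := hasFDerivAt_apply (𝕜 := ℝ) (2 : Fin 3) y
  have H := (h0.const_mul (2:ℝ)).mul h2.exp
  refine H.congr_fderiv ?_
  ext v
  simp [L3, smul_eq_mul]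
  ring

lemma hG1 (y : Fin 3 → ℝ) :
    HasFDerivAt (fun x : Fin 3 → ℝ => 2*x 1*Real.exp (x 2))
      (L3 0 (2*Real.exp (y 2)) (2*y 1*Real.exp (y 2))) y := by
  have h1 := hasFDerivAt_apply (𝕜 := ℝ) (1 : Fin 3) y
  have h2 := hasFDerivAt_apply (𝕜 := ℝ) (2 : Fin 3) y
  have H := (h1.const_mul (2:ℝ)).mul h2.exp
  refine H.congr_fderiv ?_
  ext v
  simp [L3, smul_eq_mul]
  ring

lemma hG2 (y : Fin 3 → ℝ) :
    HasFDerivAt (fun x : Fin 3 → ℝ =>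
        (x 0^2 + x 1^2)*Real.exp (x 2) - 1/4*Real.exp (-(x 2)) - Real.exp (x 2))
      (L3 (2*y 0*Real.exp (y 2)) (2*y 1*Real.exp (y 2))
        ((y 0^2+y 1^2)*Real.exp (y 2) + 1/4*Real.exp (-(y 2)) - Real.exp (y 2))) y := by
  have h2 := hasFDerivAt_apply (𝕜 := ℝ) (2 : Fin 3) y
  have H := ((((hsq0 y).add (hsq1 y)).mul h2.exp).sub
      ((h2.neg.exp).const_mul (1/4:ℝ))).sub h2.exp
  refine H.congr_fderiv ?_
  ext v
  simp [L3, smul_eq_mul]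
  ring

end aux

/-- Warren's example: `u = (x₁²+x₂²)e^{x₃} + ¼e^{−x₃} − e^{x₃}` satisfies
`σ₂(λ(D²u)) = ½((tr D²u)² − tr((D²u)²)) = 1` in `ℝ³₊`, equals the quadratic polynomial
`x₁² + x₂² − 3/4` on `{x₃ = 0}`, and is not a polynomial in `ℝ³₊`. -/
theorem stmt14 (u : (Fin 3 → ℝ) → ℝ)
    (hu : ∀ x : Fin 3 → ℝ, u x = ((x 0) ^ 2 + (x 1) ^ 2) * Real.exp (x 2)
      + (1/4) * Real.exp (-(x 2)) - Real.exp (x 2)) :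
    (∀ x : Fin 3 → ℝ, 0 < x 2 →
      (1/2) * ((∑ i, pd2 u x i i) ^ 2 - ∑ i, ∑ j, pd2 u x i j * pd2 u x j i) = 1) ∧
    (∀ x : Fin 3 → ℝ, x 2 = 0 → u x = (x 0) ^ 2 + (x 1) ^ 2 - 3/4) ∧
    ¬ ∃ P : MvPolynomial (Fin 3) ℝ, ∀ x : Fin 3 → ℝ, 0 < x 2 →
      u x = MvPolynomial.eval x P := by
  have hu' : u = fun x : Fin 3 → ℝ => ((x 0) ^ 2 + (x 1) ^ 2) * Real.exp (x 2)
      + (1/4) * Real.exp (-(x 2)) - Real.exp (x 2) := funext hu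
  subst hu'
  set U : (Fin 3 → ℝ) → ℝ := fun x : Fin 3 → ℝ => ((x 0) ^ 2 + (x 1) ^ 2) * Real.exp (x 2)
      + (1/4) * Real.exp (-(x 2)) - Real.exp (x 2) with hUdef
  have E0 : (fun y => fderiv ℝ U y (Pi.single (0:Fin 3) 1))
      = fun y : Fin 3 → ℝ => 2*y 0*Real.exp (y 2) := by
    funext y
    rw [hUdef, (hU y).fderiv]
    simp [Pi.single_apply]
  have E1 : (fun y => fderiv ℝ U y (Pi.single (1:Fin 3) 1))
      = fun y : Fin 3 → ℝ => 2*y 1*Real.exp (y 2) := by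
    funext y
    rw [hUdef, (hU y).fderiv]
    simp [Pi.single_apply]
  have E2 : (fun y => fderiv ℝ U y (Pi.single (2:Fin 3) 1))
      = fun y : Fin 3 → ℝ =>
        (y 0^2 + y 1^2)*Real.exp (y 2) - 1/4*Real.exp (-(y 2)) - Real.exp (y 2) := by
    funext y
    rw [hUdef, (hU y).fderiv]
    simp [Pi.single_apply]
  refine ⟨?_, ?_, ?_⟩
  · intro x hx
    have h0j : ∀ j, pd2 U x 0 j
        = L3 (2*Real.exp (x 2)) 0 (2*x 0*Real.exp (x 2)) (Pi.single j 1) := by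
      intro j; simp only [pd2, E0, (hG0 x).fderiv]
    have h1j : ∀ j, pd2 U x 1 j
        = L3 0 (2*Real.exp (x 2)) (2*x 1*Real.exp (x 2)) (Pi.single j 1) := by
      intro j; simp only [pd2, E1, (hG1 x).fderiv]
    have h2j : ∀ j, pd2 U x 2 j
        = L3 (2*x 0*Real.exp (x 2)) (2*x 1*Real.exp (x 2))
            ((x 0^2+x 1^2)*Real.exp (x 2) + 1/4*Real.exp (-(x 2)) - Real.exp (x 2))
            (Pi.single j 1) := by
      intro j; simp only [pd2, E2, (hG2 x).fderiv]
    have hab : Real.exp (x 2) * Real.exp (-(x 2)) = 1 := by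
      rw [← Real.exp_add]; simp
    rw [Fin.sum_univ_three, Fin.sum_univ_three, Fin.sum_univ_three, Fin.sum_univ_three,
      Fin.sum_univ_three]
    rw [h0j, h0j, h0j, h1j, h1j, h1j, h2j, h2j, h2j]
    simp [Pi.single_apply]
    linear_combination hab
  · intro x hx
    simp only [hUdef, hx]
    simp [Real.exp_zero]
    ring
  · rintro ⟨P, hP⟩
    set g : Fin 3 → Polynomial ℝ := fun i => if i = 2 then Polynomial.X else 0 with hg
    set Q : Polynomial ℝ := MvPolynomial.aeval g P with hQ
    have hQeval : ∀ t : ℝ, 0 < t →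
        Polynomial.eval t Q = 1/4 * Real.exp (-t) - Real.exp t := by
      intro t ht
      have hx : (fun i : Fin 3 => if i = 2 then t else 0) 2 = t := by simp
      have h1 := hP (fun i : Fin 3 => if i = 2 then t else 0) (by simp [ht])
      have h2 : Polynomial.eval t Q
          = MvPolynomial.eval (fun i : Fin 3 => if i = 2 then t else 0) P := by
        rw [hQ]
        have e1 : Polynomial.eval t (MvPolynomial.aeval g P)
            = Polynomial.aeval t (MvPolynomial.aeval g P) :=
          (congrFun (Polynomial.coe_aeval_eq_eval t) _).symm
        have e2 : (fun i : Fin 3 => Polynomial.aeval t (g i))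
            = fun i : Fin 3 => if i = 2 then t else 0 := by
          funext i; by_cases hi : i = 2 <;> simp [hg, hi]
        rw [e1, MvPolynomial.comp_aeval_apply (φ := Polynomial.aeval t) (f := g), e2,
          ← MvPolynomial.coe_aeval_eq_eval]
        rfl
      rw [h2, ← h1]
      simp [hUdef]
    have hlim1 : Filter.Tendsto (fun t => Polynomial.eval t Q / Real.exp t)
        Filter.atTop (nhds 0) := Q.tendsto_div_exp_atTop
    have hlim2 : Filter.Tendsto (fun t => Polynomial.eval t Q / Real.exp t)
        Filter.atTop (nhds (-1)) := by
      have base : Filter.Tendsto (fun t : ℝ => 1/4 * (Real.exp (-t) * Real.exp (-t)) - 1)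
          Filter.atTop (nhds (-1)) := by
        have h := Real.tendsto_exp_neg_atTop_nhds_zero
        have := ((h.mul h).const_mul (1/4 : ℝ)).sub_const 1
        simpa using this
      refine base.congr' ?_
      filter_upwards [Filter.eventually_gt_atTop (0:ℝ)] with t ht
      rw [hQeval t ht]
      have hne := Real.exp_ne_zero t
      have hinv : Real.exp (-t) = (Real.exp t)⁻¹ := Real.exp_neg t
      field_simp [hinv]
      have key : Real.exp (-t) * Real.exp t = 1 := by rw [← Real.exp_add]; simp
      linear_combination Real.exp (-t) * key
    exact absurd (tendsto_nhds_unique hlim1 hlim2) (by norm_num)
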